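/- For β ∈ ℂ and x ∈ ℝ define s(β, x) = Σ_{m=0}^{∞} βᵐ x^{2m+1}/(2m+1)! and c(β, x) = Σ_{m=0}^{∞} βᵐ x^{2m}/(2m)!. Let B be a 2×2 complex matrix and β₁, β₂ ∈ ℂ with tr B = β₁ + β₂ and det B = β₁ β₂. Define S(x) = Σ_{m=0}^{∞} (x^{2m+1}/(2m+1)!) Bᵐ and C(x) = Σ_{m=0}^{∞} (x^{2m}/(2m)!) Bᵐ. Then for every x ∈ ℝ, det(S(x) + C(x)) − det S(x) − det C(x) = s(β₁, x) c(β₂, x) + s(β₂, x) c(β₁, x). -/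

import Mathlib

open scoped Nat

/-- `s(β, x) = ∑_{m} βᵐ x^{2m+1}/(2m+1)!`. -/
noncomputable def sHyp (β : ℂ) (x : ℝ) : ℂ :=
  ∑' m : ℕ, β ^ m * (x : ℂ) ^ (2 * m + 1) / ((2 * m + 1)! : ℂ)

/-- `c(β, x) = ∑_{m} βᵐ x^{2m}/(2m)!`. -/
noncomputable def cHyp (β : ℂ) (x : ℝ) : ℂ :=
  ∑' m : ℕ, β ^ m * (x : ℂ) ^ (2 * m) / ((2 * m)! : ℂ)

/-- `S(x) = ∑_{m} (x^{2m+1}/(2m+1)!) Bᵐ`. -/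
noncomputable def sinhMat2 (B : Matrix (Fin 2) (Fin 2) ℂ) (x : ℝ) :
    Matrix (Fin 2) (Fin 2) ℂ :=
  ∑' m : ℕ, ((x : ℂ) ^ (2 * m + 1) / ((2 * m + 1)! : ℂ)) • B ^ m

/-- `C(x) = ∑_{m} (x^{2m}/(2m)!) Bᵐ`. -/
noncomputable def coshMat2 (B : Matrix (Fin 2) (Fin 2) ℂ) (x : ℝ) :
    Matrix (Fin 2) (Fin 2) ℂ :=
  ∑' m : ℕ, ((x : ℂ) ^ (2 * m) / ((2 * m)! : ℂ)) • B ^ m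

attribute [local instance] Matrix.linftyOpNormedAddCommGroup Matrix.linftyOpNormedRing
  Matrix.linftyOpNormedSpace Matrix.linftyOpIsBoundedSMul

lemma summable_pow_aux (u r : ℝ) (hr : 1 ≤ r) {e : ℕ → ℕ} (he : Function.Injective e)
    (hle : ∀ m, m ≤ e m) :
    Summable (fun m : ℕ => |u| ^ (e m) * r ^ m / (e m)!) := by
  have hbase : Summable (fun n : ℕ => ((1 + |u|) * r) ^ n / n !) :=
    Real.summable_pow_div_factorial _
  have h2 := hbase.comp_injective he
  refine h2.of_nonneg_of_le (fun m => by positivity) (fun m => ?_)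
  simp only [Function.comp]
  apply div_le_div_of_nonneg_right ?_ (Nat.cast_nonneg _)
  calc |u| ^ e m * r ^ m ≤ (1 + |u|) ^ e m * r ^ e m := by
        gcongr
        · linarith [abs_nonneg u]
        · exact hle m
    _ = ((1 + |u|) * r) ^ e m := (mul_pow _ _ _).symm

lemma ch2 (B : Matrix (Fin 2) (Fin 2) ℂ) : B ^ 2 = B.trace • B - B.det • (1 : Matrix (Fin 2) (Fin 2) ℂ) := by
  ext i j
  fin_cases i <;> fin_cases j <;>
    simp [pow_two, Matrix.mul_apply, Fin.sum_univ_two, Matrix.trace_fin_two,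
      Matrix.det_fin_two, Matrix.one_apply, Matrix.sub_apply, Matrix.smul_apply] <;> ring

lemma trace_pow (B : Matrix (Fin 2) (Fin 2) ℂ) (β₁ β₂ : ℂ)
    (htr : B.trace = β₁ + β₂) (hdet : B.det = β₁ * β₂) :
    ∀ m : ℕ, (B ^ m).trace = β₁ ^ m + β₂ ^ m := by
  intro m
  induction m using Nat.strong_induction_on with
  | _ m ih =>
    match m with
    | 0 => norm_num [Matrix.trace_one]
    | 1 => simpa using htr
    | (k+2) =>
      have h1 : B ^ (k + 2) = B ^ k * B ^ 2 := by rw [pow_add]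
      rw [h1, ch2 B, mul_sub, Matrix.trace_sub, mul_smul_comm, mul_smul_comm,
        Matrix.trace_smul, Matrix.trace_smul, mul_one, ← pow_succ,
        ih (k+1) (by omega), ih k (by omega), htr, hdet, smul_eq_mul, smul_eq_mul]
      ring

noncomputable def traceCLM : Matrix (Fin 2) (Fin 2) ℂ →L[ℂ] ℂ :=
  LinearMap.toContinuousLinearMap (Matrix.traceLinearMap (Fin 2) ℂ ℂ)

@[simp] lemma traceCLM_apply (M : Matrix (Fin 2) (Fin 2) ℂ) : traceCLM M = M.trace := rfl

lemma summable_norm_scalar (x : ℝ) (β : ℂ) {e : ℕ → ℕ} (he : Function.Injective e)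
    (hle : ∀ m, m ≤ e m) :
    Summable (fun m : ℕ => ‖(x : ℂ) ^ (e m) / ((e m)! : ℂ) * β ^ m‖) := by
  have h := summable_pow_aux x (1 + ‖β‖) (by linarith [norm_nonneg β]) he hle
  refine h.of_nonneg_of_le (fun m => norm_nonneg _) (fun m => ?_)
  rw [norm_mul, norm_div, norm_pow, norm_pow, Complex.norm_real, Complex.norm_natCast,
    Real.norm_eq_abs]
  rw [div_mul_eq_mul_div]
  gcongr
  · linarith [norm_nonneg β]

lemma summable_norm_mat (x : ℝ) (B : Matrix (Fin 2) (Fin 2) ℂ) {e : ℕ → ℕ}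
    (he : Function.Injective e) (hle : ∀ m, m ≤ e m) :
    Summable (fun m : ℕ => ‖((x : ℂ) ^ (e m) / ((e m)! : ℂ)) • B ^ m‖) := by
  have h := summable_pow_aux x (1 + ‖B‖) (by linarith [norm_nonneg B]) he hle
  refine h.of_nonneg_of_le (fun m => norm_nonneg _) (fun m => ?_)
  have hpow : ∀ m : ℕ, ‖B ^ m‖ ≤ (1 + ‖B‖) ^ m := by
    intro m
    induction m with
    | zero => simp
    | succ k ihk =>
      calc ‖B ^ (k+1)‖ = ‖B ^ k * B‖ := by rw [pow_succ]
        _ ≤ ‖B ^ k‖ * ‖B‖ := norm_mul_le _ _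
        _ ≤ (1 + ‖B‖) ^ k * (1 + ‖B‖) := by
            gcongr
            · linarith [norm_nonneg B]
        _ = (1 + ‖B‖) ^ (k+1) := (pow_succ _ _).symm
  rw [norm_smul, norm_div, norm_pow, Complex.norm_real, Complex.norm_natCast, Real.norm_eq_abs,
    div_mul_eq_mul_div]
  gcongr
  · exact hpow m

lemma he1 : Function.Injective (fun m : ℕ => 2 * m + 1) := fun a b h => by simp only at h; omega
lemma he2 : Function.Injective (fun m : ℕ => 2 * m) := fun a b h => by simp only at h; omega
lemma hle1 : ∀ m : ℕ, m ≤ 2 * m + 1 := fun m => by omega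
lemma hle2 : ∀ m : ℕ, m ≤ 2 * m := fun m => by omega

set_option maxHeartbeats 1600000 in
/-- Let `B` be a `2 × 2` complex matrix with eigenvalues `β₁, β₂` (i.e.
`tr B = β₁ + β₂` and `det B = β₁ β₂`). Then for every `x ∈ ℝ`,
`det (S(x) + C(x)) − det S(x) − det C(x) = s(β₁,x) c(β₂,x) + s(β₂,x) c(β₁,x)`. -/
theorem stmt14 (B : Matrix (Fin 2) (Fin 2) ℂ) (β₁ β₂ : ℂ)
    (htr : B.trace = β₁ + β₂) (hdet : B.det = β₁ * β₂) (x : ℝ) :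
    (sinhMat2 B x + coshMat2 B x).det - (sinhMat2 B x).det - (coshMat2 B x).det =
      sHyp β₁ x * cHyp β₂ x + sHyp β₂ x * cHyp β₁ x := by
  set a : ℕ → ℂ := fun m => (x : ℂ) ^ (2 * m + 1) / ((2 * m + 1)! : ℂ) with ha
  set b : ℕ → ℂ := fun m => (x : ℂ) ^ (2 * m) / ((2 * m)! : ℂ) with hb
  -- summability
  have hsa : Summable (fun m => ‖a m • B ^ m‖) := summable_norm_mat x B he1 hle1
  have hsb : Summable (fun m => ‖b m • B ^ m‖) := summable_norm_mat x B he2 hle2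
  have hsa1 : Summable (fun m => ‖a m * β₁ ^ m‖) := summable_norm_scalar x β₁ he1 hle1
  have hsa2 : Summable (fun m => ‖a m * β₂ ^ m‖) := summable_norm_scalar x β₂ he1 hle1
  have hsb1 : Summable (fun m => ‖b m * β₁ ^ m‖) := summable_norm_scalar x β₁ he2 hle2
  have hsb2 : Summable (fun m => ‖b m * β₂ ^ m‖) := summable_norm_scalar x β₂ he2 hle2
  have htrpow := trace_pow B β₁ β₂ htr hdet
  -- expressions for sHyp, cHyp
  have hsH : ∀ β : ℂ, sHyp β x = ∑' m, a m * β ^ m := fun β =>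
    tsum_congr fun m => by rw [ha]; ring
  have hcH : ∀ β : ℂ, cHyp β x = ∑' m, b m * β ^ m := fun β =>
    tsum_congr fun m => by rw [hb]; ring
  -- trace of S
  have htrS : (sinhMat2 B x).trace = sHyp β₁ x + sHyp β₂ x := by
    rw [sinhMat2, ← traceCLM_apply, traceCLM.map_tsum hsa.of_norm]
    simp only [traceCLM_apply, Matrix.trace_smul, smul_eq_mul, htrpow]
    rw [show (fun m => a m * (β₁ ^ m + β₂ ^ m)) = fun m => a m * β₁ ^ m + a m * β₂ ^ m by
      funext m; ring]
    rw [Summable.tsum_add hsa1.of_norm hsa2.of_norm, hsH, hsH]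
  have htrC : (coshMat2 B x).trace = cHyp β₁ x + cHyp β₂ x := by
    rw [coshMat2, ← traceCLM_apply, traceCLM.map_tsum hsb.of_norm]
    simp only [traceCLM_apply, Matrix.trace_smul, smul_eq_mul, htrpow]
    rw [show (fun m => b m * (β₁ ^ m + β₂ ^ m)) = fun m => b m * β₁ ^ m + b m * β₂ ^ m by
      funext m; ring]
    rw [Summable.tsum_add hsb1.of_norm hsb2.of_norm, hcH, hcH]
  have htrSC : (sinhMat2 B x * coshMat2 B x).trace =
      sHyp β₁ x * cHyp β₁ x + sHyp β₂ x * cHyp β₂ x := by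
    rw [show sinhMat2 B x = ∑' m, a m • B ^ m from rfl,
      show coshMat2 B x = ∑' m, b m • B ^ m from rfl]
    erw [tsum_mul_tsum_of_summable_norm hsa hsb]
    have hmul := summable_mul_of_summable_norm hsa hsb
    rw [← traceCLM_apply]
    erw [traceCLM.map_tsum hmul]
    simp only [traceCLM_apply, smul_mul_smul_comm, ← pow_add, Matrix.trace_smul, smul_eq_mul,
      htrpow]
    have step1 : (∑' z : ℕ × ℕ, a z.1 * b z.2 * (β₁ ^ (z.1 + z.2) + β₂ ^ (z.1 + z.2)))
        = ∑' z : ℕ × ℕ, (a z.1 * β₁ ^ z.1 * (b z.2 * β₁ ^ z.2) +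
            a z.1 * β₂ ^ z.1 * (b z.2 * β₂ ^ z.2)) :=
      tsum_congr fun z => by rw [pow_add, pow_add]; ring
    have step2 := Summable.tsum_add (summable_mul_of_summable_norm hsa1 hsb1)
      (summable_mul_of_summable_norm hsa2 hsb2)
    rw [step1, step2, ← tsum_mul_tsum_of_summable_norm hsa1 hsb1,
      ← tsum_mul_tsum_of_summable_norm hsa2 hsb2, hsH, hsH, hcH, hcH]
  -- the determinant polarization identity for 2×2 matrices
  have hdetid : ∀ S C : Matrix (Fin 2) (Fin 2) ℂ,
      (S + C).det - S.det - C.det = S.trace * C.trace - (S * C).trace := by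
    intro S C
    simp only [Matrix.det_fin_two, Matrix.trace_fin_two, Matrix.add_apply, Matrix.mul_apply,
      Fin.sum_univ_two]
    ring
  rw [hdetid, htrS, htrC, htrSC]
  ring
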